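/- Let A, B, C, D be four affinely independent (non-coplanar) points of Euclidean space ℝ³ and let e₁, e₂, e₃ be real numbers. Then the set of points P ∈ ℝ³ satisfying dist P A − dist P D = e₁, dist P B − dist P D = e₂, and dist P C − dist P D = e₃ is finite. (Geometrically, P is an intersection point of three hyperboloids with focus D and second foci A, B, C respectively.) -/

import Mathlib

open Polynomial Submodule

set_option maxHeartbeats 1000000

private lemma quad_vanish {a b c : ℝ} {T : Set ℝ}
    (hT : T.Infinite) (h : ∀ r ∈ T, a * r ^ 2 + b * r + c = 0) :
    a = 0 ∧ b = 0 ∧ c = 0 := by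
  have hp : (C a * X ^ 2 + C b * X + C c : ℝ[X]) = 0 := by
    apply Polynomial.eq_zero_of_infinite_isRoot
    apply hT.mono
    intro r hr
    simp only [Set.mem_setOf_eq, Polynomial.IsRoot, eval_add, eval_mul, eval_C, eval_pow, eval_X]
    linarith [h r hr]
  refine ⟨?_, ?_, ?_⟩
  · have := congrArg (fun q => Polynomial.coeff q 2) hp
    simpa using this
  · have := congrArg (fun q => Polynomial.coeff q 1) hp
    simpa using this
  · have := congrArg (fun q => Polynomial.coeff q 0) hp
    simpa using this

private lemma inner_eq_of_dist_sub (X D P : EuclideanSpace ℝ (Fin 3)) (e r : ℝ)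
    (hr : r = dist P D) (h : dist P X - dist P D = e) :
    (inner ℝ (X - D) P : ℝ) = (‖X‖ ^ 2 - ‖D‖ ^ 2 - e ^ 2) / 2 - e * r := by
  have hPX : dist P X = r + e := by rw [hr]; linarith
  have h1 : ‖P - X‖ ^ 2 = (r + e) ^ 2 := by rw [← dist_eq_norm, hPX]
  have h2 : ‖P - D‖ ^ 2 = r ^ 2 := by rw [← dist_eq_norm, ← hr]
  rw [norm_sub_sq_real] at h1 h2
  have h3 : (inner ℝ (X - D) P : ℝ) = inner ℝ P X - inner ℝ P D := by
    rw [inner_sub_left, real_inner_comm X P, real_inner_comm D P]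
  rw [h3]; nlinarith [h1, h2]

/-- Given four affinely independent points `A, B, C, D` of Euclidean `3`-space and
real numbers `e₁, e₂, e₃`, the set of points `P` with `dist P A - dist P D = e₁`,
`dist P B - dist P D = e₂` and `dist P C - dist P D = e₃` is finite. -/
theorem hyperboloid_intersection_finite
    (A B C D : EuclideanSpace ℝ (Fin 3)) (e₁ e₂ e₃ : ℝ)
    (hindep : AffineIndependent ℝ ![A, B, C, D]) :
    {P : EuclideanSpace ℝ (Fin 3) |
        dist P A - dist P D = e₁ ∧ dist P B - dist P D = e₂ ∧
        dist P C - dist P D = e₃}.Finite := by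
  set S := {P : EuclideanSpace ℝ (Fin 3) |
        dist P A - dist P D = e₁ ∧ dist P B - dist P D = e₂ ∧
        dist P C - dist P D = e₃} with hS
  set u : Fin 3 → EuclideanSpace ℝ (Fin 3) := ![A - D, B - D, C - D] with hu
  have hli : LinearIndependent ℝ u := by
    have h := (affineIndependent_iff_linearIndependent_vsub ℝ ![A, B, C, D] 3).mp hindep
    let e : Fin 3 → {x : Fin 4 // x ≠ (3 : Fin 4)} := fun i => ⟨i.castSucc, by
      intro hcon
      have h4 : (i.castSucc : Fin 4).val = 3 := by rw [hcon]; rfl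
      have : i.val = 3 := by simpa using h4
      omega⟩
    have hinj : Function.Injective e := by
      intro a b hab
      have : a.castSucc = b.castSucc := congrArg Subtype.val hab
      exact Fin.castSucc_injective _ this
    have h2 := h.comp e hinj
    have h2' : LinearIndependent ℝ (fun i => ![A, B, C, D] ↑(e i) -ᵥ ![A, B, C, D] 3) := h2
    have heq : (fun i => ![A, B, C, D] ↑(e i) -ᵥ ![A, B, C, D] 3) = u := by
      funext i
      fin_cases i <;> simp [e, hu] <;> rfl
    rwa [heq] at h2'
  have hspan : span ℝ (Set.range u) = ⊤ := by
    apply hli.span_eq_top_of_card_eq_finrank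
    simp [finrank_euclideanSpace_fin]
  set g : EuclideanSpace ℝ (Fin 3) →ₗ[ℝ] (Fin 3 → ℝ) :=
    LinearMap.pi (fun i => innerSL ℝ (u i)) with hg
  have hginj : Function.Injective g := by
    rw [← LinearMap.ker_eq_bot, LinearMap.ker_eq_bot']
    intro P hP
    have h0 : ∀ i, (inner ℝ (u i) P : ℝ) = 0 := fun i => congrFun hP i
    have hPo : P ∈ (span ℝ (Set.range u))ᗮ := by
      rw [Submodule.mem_orthogonal]
      intro x hx
      induction hx using Submodule.span_induction with
      | mem x hx => obtain ⟨i, rfl⟩ := hx; exact h0 i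
      | zero => simp
      | add x y _ _ hx hy => rw [inner_add_left, hx, hy]; ring
      | smul c x _ hx => rw [inner_smul_left, hx]; ring
    rw [hspan, Submodule.top_orthogonal_eq_bot] at hPo
    simpa using hPo
  have hgsurj : Function.Surjective g := by
    have := LinearMap.injective_iff_surjective_of_finrank_eq_finrank (f := g)
      (by simp [finrank_euclideanSpace_fin])
    exact this.mp hginj
  set eqv : EuclideanSpace ℝ (Fin 3) ≃ₗ[ℝ] (Fin 3 → ℝ) :=
    LinearEquiv.ofBijective g ⟨hginj, hgsurj⟩ with heqv
  set cv : Fin 3 → ℝ := ![(‖A‖ ^ 2 - ‖D‖ ^ 2 - e₁ ^ 2) / 2,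
      (‖B‖ ^ 2 - ‖D‖ ^ 2 - e₂ ^ 2) / 2, (‖C‖ ^ 2 - ‖D‖ ^ 2 - e₃ ^ 2) / 2] with hcv
  set w : Fin 3 → ℝ := ![-e₁, -e₂, -e₃] with hw
  set P₀ : EuclideanSpace ℝ (Fin 3) := eqv.symm cv with hP₀def
  set v : EuclideanSpace ℝ (Fin 3) := eqv.symm w with hvdef
  have hgP₀ : g P₀ = cv := eqv.apply_symm_apply cv
  have hgv : g v = w := eqv.apply_symm_apply w
  -- every point of S is an affine function of its distance to D
  have hkey : ∀ P ∈ S, P = P₀ + dist P D • v := by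
    intro P hP
    obtain ⟨h1, h2, h3⟩ := hP
    apply hginj
    have hrhs : g (P₀ + dist P D • v) = cv + dist P D • w := by
      rw [map_add, map_smul, hgP₀, hgv]
    rw [hrhs]
    funext i
    fin_cases i
    · show (inner ℝ (A - D) P : ℝ) = (‖A‖ ^ 2 - ‖D‖ ^ 2 - e₁ ^ 2) / 2 + dist P D * (-e₁)
      rw [inner_eq_of_dist_sub A D P e₁ (dist P D) rfl h1]; ring
    · show (inner ℝ (B - D) P : ℝ) = (‖B‖ ^ 2 - ‖D‖ ^ 2 - e₂ ^ 2) / 2 + dist P D * (-e₂)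
      rw [inner_eq_of_dist_sub B D P e₂ (dist P D) rfl h2]; ring
    · show (inner ℝ (C - D) P : ℝ) = (‖C‖ ^ 2 - ‖D‖ ^ 2 - e₃ ^ 2) / 2 + dist P D * (-e₃)
      rw [inner_eq_of_dist_sub C D P e₃ (dist P D) rfl h3]; ring
  -- suppose S is infinite
  rw [← Set.not_infinite]
  intro hSinf
  set T : Set ℝ := (fun P => dist P D) '' S with hT
  have hTinf : T.Infinite := by
    intro hTfin
    apply hSinf
    have hsub : S ⊆ (fun r => P₀ + r • v) '' T := by
      intro P hP
      exact ⟨dist P D, ⟨P, hP, rfl⟩, (hkey P hP).symm⟩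
    exact (hTfin.image _).subset hsub
  -- each distance satisfies a quadratic equation
  have hquad : ∀ r ∈ T, (‖v‖ ^ 2 - 1) * r ^ 2 + (2 * inner ℝ (P₀ - D) v) * r
      + ‖P₀ - D‖ ^ 2 = 0 := by
    rintro r ⟨P, hP, hr⟩
    have hr' : dist P D = r := hr
    have hPeq := hkey P hP
    rw [hr'] at hPeq
    have hnorm : ‖P - D‖ ^ 2 = r ^ 2 := by rw [← dist_eq_norm, hr']
    have hPD : P - D = (P₀ - D) + r • v := by rw [hPeq]; abel
    rw [hPD, norm_add_sq_real, real_inner_smul_right, norm_smul] at hnorm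
    simp only [Real.norm_eq_abs] at hnorm
    nlinarith [hnorm, sq_abs r]
  obtain ⟨ha, hb, hc0⟩ := quad_vanish hTinf hquad
  have hvnorm : ‖v‖ ^ 2 = 1 := by linarith
  have hP₀D : P₀ = D := by
    have h5 : ‖P₀ - D‖ = 0 := sq_eq_zero_iff.mp hc0
    rwa [norm_eq_zero, sub_eq_zero] at h5
  -- degenerate case: all points lie on a line through D
  have hline : ∀ (X : EuclideanSpace ℝ (Fin 3)) (e : ℝ),
      (∀ P ∈ S, dist P X - dist P D = e) → X - D = (-e) • v := by
    intro X e hX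
    have hlin : ∀ r ∈ T, (0 : ℝ) * r ^ 2 + (2 * (inner ℝ (D - X) v - e)) * r
        + (‖D - X‖ ^ 2 - e ^ 2) = 0 := by
      rintro r ⟨P, hP, hr⟩
      have hr' : dist P D = r := hr
      have hPeq := hkey P hP
      rw [hr'] at hPeq
      have hdX : dist P X = r + e := by linarith [hX P hP, hr'.symm.le, hr'.ge]
      have hnorm : ‖P - X‖ ^ 2 = (r + e) ^ 2 := by rw [← dist_eq_norm, hdX]
      have hPX : P - X = (D - X) + r • v := by rw [hPeq, hP₀D]; abel
      rw [hPX, norm_add_sq_real, real_inner_smul_right, norm_smul] at hnorm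
      simp only [Real.norm_eq_abs] at hnorm
      nlinarith [hnorm, sq_abs r, hvnorm]
    obtain ⟨_, hb', hc'⟩ := quad_vanish hTinf hlin
    have h1 : (inner ℝ (D - X) v : ℝ) = e := by linarith
    have h2 : ‖D - X‖ ^ 2 = e ^ 2 := by linarith
    have h3 : (inner ℝ (X - D) v : ℝ) = -e := by
      have hneg : (inner ℝ (X - D) v : ℝ) = -(inner ℝ (D - X) v : ℝ) := by
        rw [← inner_neg_left, neg_sub]
      rw [hneg, h1]
    have h4 : ‖X - D‖ ^ 2 = e ^ 2 := by rw [norm_sub_rev]; exact h2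
    have h5 : ‖(X - D) - (-e) • v‖ ^ 2 = 0 := by
      rw [norm_sub_sq_real, real_inner_smul_right, norm_smul]
      simp only [Real.norm_eq_abs]
      have h7 : (|(-e)| * ‖v‖) ^ 2 = e ^ 2 := by
        rw [mul_pow, sq_abs, hvnorm]; ring
      rw [h7, h3, h4]; ring
    have h6 : (X - D) - (-e) • v = 0 := by
      rwa [sq_eq_zero_iff, norm_eq_zero] at h5
    exact sub_eq_zero.mp h6
  have hA : A - D = (-e₁) • v := hline A e₁ (fun P hP => hP.1)
  have hB : B - D = (-e₂) • v := hline B e₂ (fun P hP => hP.2.1)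
  have hC : C - D = (-e₃) • v := hline C e₃ (fun P hP => hP.2.2)
  have hle : span ℝ (Set.range u) ≤ span ℝ ({v} : Set (EuclideanSpace ℝ (Fin 3))) := by
    rw [Submodule.span_le]
    rintro x ⟨i, rfl⟩
    fin_cases i
    · show A - D ∈ span ℝ ({v} : Set (EuclideanSpace ℝ (Fin 3)))
      rw [hA]; exact Submodule.smul_mem _ _ (Submodule.mem_span_singleton_self v)
    · show B - D ∈ span ℝ ({v} : Set (EuclideanSpace ℝ (Fin 3)))
      rw [hB]; exact Submodule.smul_mem _ _ (Submodule.mem_span_singleton_self v)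
    · show C - D ∈ span ℝ ({v} : Set (EuclideanSpace ℝ (Fin 3)))
      rw [hC]; exact Submodule.smul_mem _ _ (Submodule.mem_span_singleton_self v)
  rw [hspan] at hle
  have hvtop : span ℝ ({v} : Set (EuclideanSpace ℝ (Fin 3))) = ⊤ := top_le_iff.mp hle
  have hvne : v ≠ 0 := by
    intro h0
    rw [h0] at hvnorm
    simp at hvnorm
  have hrank := finrank_span_singleton (K := ℝ) hvne
  rw [hvtop, finrank_top, finrank_euclideanSpace_fin] at hrank
  omega
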